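/- Let Γ and Δ be finite sets, K ≤ Sym(Γ) and L ≤ Sym(Δ), and let the direct product K × L act on the Cartesian product Γ × Δ by (γ, δ)^(k,l) = (γ^k, δ^l). Then for every integer m ≥ 2, (K × L)^(m) = K^(m) × L^(m). -/

import Mathlib

open Equiv MulAction Pointwise

/-- The `m`-closure of a permutation group `G ≤ Sym(Ω)`: the largest subgroup of `Sym(Ω)`
having the same orbits as `G` in the induced componentwise action on `Ω^m`. -/
def mClosure {Ω : Type*} (m : ℕ) (G : Subgroup (Equiv.Perm Ω)) : Subgroup (Equiv.Perm Ω) :=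
  sSup {H : Subgroup (Equiv.Perm Ω) |
    ∀ α : Fin m → Ω, MulAction.orbit H α = MulAction.orbit G α}

/-- An ordered partition of `Ω` into at most `m` nonempty classes. -/
structure OrderedPartition (Ω : Type*) (m : ℕ) where
  classes : List (Set Ω)
  length_le : classes.length ≤ m
  nonempty : ∀ s ∈ classes, s.Nonempty
  pairwise_disjoint : classes.Pairwise Disjoint
  covers : ∀ x : Ω, ∃ s ∈ classes, x ∈ s

namespace OrderedPartition

variable {Ω : Type*} {m : ℕ}

theorem ext' {P Q : OrderedPartition Ω m} (h : P.classes = Q.classes) : P = Q := by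
  cases P; cases Q; simpa using h

/-- The natural action of a permutation on an ordered partition, classwise. -/
def act (f : Equiv.Perm Ω) (P : OrderedPartition Ω m) : OrderedPartition Ω m where
  classes := P.classes.map fun s => f '' s
  length_le := by simpa using P.length_le
  nonempty := by
    intro s hs
    obtain ⟨t, ht, rfl⟩ := List.mem_map.mp hs
    exact (P.nonempty t ht).image _
  pairwise_disjoint :=
    P.pairwise_disjoint.map _ fun s t h => (Set.disjoint_image_iff f.injective).mpr h
  covers := by
    intro x
    obtain ⟨s, hs, hx⟩ := P.covers (f⁻¹ x)
    exact ⟨f '' s, List.mem_map_of_mem hs, f⁻¹ x, hx, by simp⟩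

instance : SMul (Equiv.Perm Ω) (OrderedPartition Ω m) := ⟨act⟩

theorem smul_classes (f : Equiv.Perm Ω) (P : OrderedPartition Ω m) :
    (f • P).classes = P.classes.map fun s => f '' s := rfl

instance : MulAction (Equiv.Perm Ω) (OrderedPartition Ω m) where
  one_smul P := ext' (by simp [smul_classes])
  mul_smul f g P := ext' (by
    simp [smul_classes, List.map_map, Function.comp_def, Set.image_image])

end OrderedPartition

/-- The partition `m`-closure `G^[m]` of a permutation group `G ≤ Sym(Ω)`: the largest
subgroup of `Sym(Ω)` having the same orbits as `G` in its induced action on the set of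
ordered partitions of `Ω` into at most `m` nonempty classes. -/
def partClosure {Ω : Type*} (m : ℕ) (G : Subgroup (Equiv.Perm Ω)) : Subgroup (Equiv.Perm Ω) :=
  sSup {H : Subgroup (Equiv.Perm Ω) |
    ∀ P : OrderedPartition Ω m, MulAction.orbit H P = MulAction.orbit G P}

/-- The element `(g_1, …, g_d; ḡ)` of the wreath product in product action:
`(ω^g)_i = (ω_{i^{ḡ⁻¹}})^{g_{i^{ḡ⁻¹}}}`. -/
def wreathElem {Γ Δ : Type*} (gs : Δ → Equiv.Perm Γ) (σ : Equiv.Perm Δ) :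
    Equiv.Perm (Δ → Γ) where
  toFun ω i := gs (σ⁻¹ i) (ω (σ⁻¹ i))
  invFun ω i := (gs i)⁻¹ (ω (σ i))
  left_inv ω := by funext i; simp
  right_inv ω := by funext i; simp

theorem wreathElem_apply {Γ Δ : Type*} (gs : Δ → Equiv.Perm Γ) (σ : Equiv.Perm Δ)
    (ω : Δ → Γ) (i : Δ) : wreathElem gs σ ω i = gs (σ⁻¹ i) (ω (σ⁻¹ i)) := rfl

theorem wreathElem_one {Γ Δ : Type*} :
    wreathElem (fun _ : Δ => (1 : Equiv.Perm Γ)) 1 = 1 := by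
  refine Equiv.ext fun ω => funext fun i => ?_
  simp [wreathElem_apply]

theorem wreathElem_mul {Γ Δ : Type*} (gs hs : Δ → Equiv.Perm Γ) (σ τ : Equiv.Perm Δ) :
    wreathElem gs σ * wreathElem hs τ = wreathElem (fun j => gs (τ j) * hs j) (σ * τ) := by
  refine Equiv.ext fun ω => funext fun i => ?_
  simp [wreathElem_apply, Equiv.Perm.mul_apply, mul_inv_rev]

theorem wreathElem_inv {Γ Δ : Type*} (gs : Δ → Equiv.Perm Γ) (σ : Equiv.Perm Δ) :
    (wreathElem gs σ)⁻¹ = wreathElem (fun j => (gs (σ⁻¹ j))⁻¹) σ⁻¹ := by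
  rw [inv_eq_iff_mul_eq_one, wreathElem_mul]
  simpa using wreathElem_one

/-- The wreath product `K ↑ L` of `K ≤ Sym(Γ)` and `L ≤ Sym(Δ)` in product action,
as a subgroup of `Sym(Γ^Δ)`. -/
def wreathProduct {Γ Δ : Type*} (K : Subgroup (Equiv.Perm Γ)) (L : Subgroup (Equiv.Perm Δ)) :
    Subgroup (Equiv.Perm (Δ → Γ)) where
  carrier := {h | ∃ (gs : Δ → Equiv.Perm Γ) (σ : Equiv.Perm Δ),
    (∀ i, gs i ∈ K) ∧ σ ∈ L ∧ h = wreathElem gs σ}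
  one_mem' := ⟨fun _ => 1, 1, fun _ => K.one_mem, L.one_mem, wreathElem_one.symm⟩
  mul_mem' := by
    rintro f h ⟨gs, σ, hgs, hσ, rfl⟩ ⟨hs, τ, hhs, hτ, rfl⟩
    exact ⟨fun j => gs (τ j) * hs j, σ * τ, fun j => K.mul_mem (hgs _) (hhs _),
      L.mul_mem hσ hτ, wreathElem_mul gs hs σ τ⟩
  inv_mem' := by
    rintro f ⟨gs, σ, hgs, hσ, rfl⟩
    exact ⟨fun j => (gs (σ⁻¹ j))⁻¹, σ⁻¹, fun j => K.inv_mem (hgs _), L.inv_mem hσ,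
      wreathElem_inv gs σ⟩

/-- `k_m`: the number of orbits of `K ≤ Sym(Γ)` in its componentwise action on `Γ^m`. -/
noncomputable def numOrbits {Γ : Type*} (m : ℕ) (K : Subgroup (Equiv.Perm Γ)) : ℕ :=
  Nat.card (MulAction.orbitRel.Quotient K (Fin m → Γ))

/-- A permutation group `L ≤ Sym(Δ)` is primitive if it is transitive and preserves
no nontrivial partition of `Δ` (partitions being identified with equivalence relations). -/
def IsPrimitiveSubgroup {Δ : Type*} (L : Subgroup (Equiv.Perm Δ)) : Prop :=
  (∀ x y : Δ, ∃ g ∈ L, g x = y) ∧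
  ∀ r : Setoid Δ, (∀ g ∈ L, ∀ x y : Δ, r.r x y → r.r (g x) (g y)) → r = ⊥ ∨ r = ⊤

/-- The direct product `K × L ≤ Sym(Γ × Δ)` acting coordinatewise on `Γ × Δ`. -/
def prodSubgroup {Γ Δ : Type*} (K : Subgroup (Equiv.Perm Γ)) (L : Subgroup (Equiv.Perm Δ)) :
    Subgroup (Equiv.Perm (Γ × Δ)) where
  carrier := {h | ∃ k ∈ K, ∃ l ∈ L, h = Equiv.prodCongr k l}
  one_mem' := ⟨1, K.one_mem, 1, L.one_mem, Equiv.ext fun x => rfl⟩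
  mul_mem' := by
    rintro f h ⟨k₁, hk₁, l₁, hl₁, rfl⟩ ⟨k₂, hk₂, l₂, hl₂, rfl⟩
    exact ⟨k₁ * k₂, K.mul_mem hk₁ hk₂, l₁ * l₂, L.mul_mem hl₁ hl₂, Equiv.ext fun x => rfl⟩
  inv_mem' := by
    rintro f ⟨k, hk, l, hl, rfl⟩
    exact ⟨k⁻¹, K.inv_mem hk, l⁻¹, L.inv_mem hl, Equiv.ext fun x => rfl⟩

/-- Given an enumeration (via `sIdx`) of the orbits of `K` on `Γ^m` by `Fin a`,
and `α ∈ Ω^m` with `Ω = Γ^d` viewed as a `d × m` matrix with rows `α[i] = (j ↦ α j i)`,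
`piClasses sIdx α` is the ordered partition `Π(α)` of `Δ = Fin d` whose `ℓ`-th class
consists of the `i` whose row `α[i]` lies in the orbit with the `ℓ`-th smallest
occurring index. -/
def piClasses {Γ : Type*} {d m a : ℕ} (sIdx : (Fin m → Γ) → Fin a)
    (α : Fin m → (Fin d → Γ)) : List (Set (Fin d)) :=
  ((Finset.univ.image fun i : Fin d => sIdx fun j => α j i).sort (· ≤ ·)).map
    fun t => {i : Fin d | sIdx (fun j => α j i) = t}

def closureAux {Ω : Type*} (m : ℕ) (G : Subgroup (Equiv.Perm Ω)) : Subgroup (Equiv.Perm Ω) where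
  carrier := {f | ∀ α : Fin m → Ω, ∃ g ∈ G, g • α = f • α}
  one_mem' := fun α => ⟨1, G.one_mem, rfl⟩
  mul_mem' := by
    rintro f h hf hh α
    obtain ⟨g₂, hg₂, e₂⟩ := hh α
    obtain ⟨g₁, hg₁, e₁⟩ := hf (g₂ • α)
    exact ⟨g₁ * g₂, G.mul_mem hg₁ hg₂, by rw [mul_smul, e₁, e₂, ← mul_smul]⟩
  inv_mem' := by
    intro f hf α
    obtain ⟨g, hg, e⟩ := hf (f⁻¹ • α)
    have h2 : g • (f⁻¹ • α) = α := by rw [e, smul_inv_smul]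
    exact ⟨g⁻¹, G.inv_mem hg, by rw [inv_smul_eq_iff]; exact h2.symm⟩

theorem mClosure_eq_closureAux {Ω : Type*} (m : ℕ) (G : Subgroup (Equiv.Perm Ω)) :
    mClosure m G = closureAux m G := by
  apply le_antisymm
  · apply sSup_le
    intro H hH f hfH α
    have h1 : f • α ∈ MulAction.orbit H α := ⟨⟨f, hfH⟩, rfl⟩
    rw [hH α] at h1
    obtain ⟨g, hg⟩ := h1
    exact ⟨(g : Equiv.Perm Ω), g.2, hg⟩
  · apply le_sSup
    intro α
    ext x
    constructor
    · rintro ⟨⟨c, hc⟩, rfl⟩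
      obtain ⟨g, hg, e⟩ := hc α
      exact ⟨⟨g, hg⟩, e⟩
    · rintro ⟨g, rfl⟩
      exact ⟨⟨(g : Equiv.Perm Ω), fun β => ⟨g, g.2, rfl⟩⟩, rfl⟩

theorem mem_mClosure_iff {Ω : Type*} {m : ℕ} {G : Subgroup (Equiv.Perm Ω)} {f : Equiv.Perm Ω} :
    f ∈ mClosure m G ↔ ∀ α : Fin m → Ω, ∃ g ∈ G, g • α = f • α := by
  rw [mClosure_eq_closureAux]; rfl

/-- **Theorem (direct products).** For `K ≤ Sym(Γ)`, `L ≤ Sym(Δ)` acting coordinatewise on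
`Γ × Δ` and every `m ≥ 2`: `(K × L)^(m) = K^(m) × L^(m)`. -/
theorem mClosure_prodSubgroup {Γ Δ : Type*} [Fintype Γ] [Fintype Δ]
    (K : Subgroup (Equiv.Perm Γ)) (L : Subgroup (Equiv.Perm Δ)) (m : ℕ) (hm : 2 ≤ m) :
    mClosure m (prodSubgroup K L) = prodSubgroup (mClosure m K) (mClosure m L) := by
  ext f
  rw [mem_mClosure_iff]
  constructor
  · intro hf
    rcases isEmpty_or_nonempty (Γ × Δ) with hE | hNE
    · refine ⟨1, (mClosure m K).one_mem, 1, (mClosure m L).one_mem, Equiv.ext fun x => hE.elim x⟩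
    have hΓ : Nonempty Γ := ⟨hNE.some.1⟩
    have hΔ : Nonempty Δ := ⟨hNE.some.2⟩
    obtain ⟨γ₀⟩ := hΓ; obtain ⟨δ₀⟩ := hΔ
    set j0 : Fin m := ⟨0, by omega⟩ with hj0
    set j1 : Fin m := ⟨1, by omega⟩ with hj1
    have hj : j1 ≠ j0 := by simp [hj0, hj1, Fin.ext_iff]
    -- first coordinate of f (γ, δ) does not depend on δ
    have hfst : ∀ γ δ δ', (f (γ, δ)).1 = (f (γ, δ')).1 := by
      intro γ δ δ'
      obtain ⟨g, ⟨k, hk, l, hl, rfl⟩, he⟩ :=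
        hf (fun j => if j = j0 then (γ, δ) else (γ, δ'))
      have h0 := congrFun he j0
      have h1 := congrFun he j1
      simp [Pi.smul_apply, Equiv.Perm.smul_def, hj] at h0 h1
      rw [← h0, ← h1]
    have hsnd : ∀ γ γ' δ, (f (γ, δ)).2 = (f (γ', δ)).2 := by
      intro γ γ' δ
      obtain ⟨g, ⟨k, hk, l, hl, rfl⟩, he⟩ :=
        hf (fun j => if j = j0 then (γ, δ) else (γ', δ))
      have h0 := congrFun he j0
      have h1 := congrFun he j1
      simp [Pi.smul_apply, Equiv.Perm.smul_def, hj] at h0 h1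
      rw [← h0, ← h1]
    set a : Γ → Γ := fun γ => (f (γ, δ₀)).1 with ha
    set b : Δ → Δ := fun δ => (f (γ₀, δ)).2 with hb
    have hfab : ∀ γ δ, f (γ, δ) = (a γ, b δ) := by
      intro γ δ
      exact Prod.ext (hfst γ δ δ₀) (hsnd γ γ₀ δ)
    have hainj : Function.Injective a := by
      intro γ γ' h
      have : f (γ, δ₀) = f (γ', δ₀) := by rw [hfab, hfab, h]
      exact (Prod.ext_iff.mp (f.injective this)).1
    have hbinj : Function.Injective b := by
      intro δ δ' h
      have : f (γ₀, δ) = f (γ₀, δ') := by rw [hfab, hfab, h]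
      exact (Prod.ext_iff.mp (f.injective this)).2
    set k : Equiv.Perm Γ := Equiv.ofBijective a (Finite.injective_iff_bijective.mp hainj)
    set l : Equiv.Perm Δ := Equiv.ofBijective b (Finite.injective_iff_bijective.mp hbinj)
    have hka : ∀ γ, k γ = a γ := fun _ => rfl
    have hlb : ∀ δ, l δ = b δ := fun _ => rfl
    refine ⟨k, ?_, l, ?_, ?_⟩
    · rw [mem_mClosure_iff]
      intro β
      obtain ⟨g, ⟨k', hk', l', hl', rfl⟩, he⟩ := hf (fun j => (β j, δ₀))
      refine ⟨k', hk', funext fun j => ?_⟩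
      have := congrFun he j
      simp [Pi.smul_apply, Equiv.Perm.smul_def, hfab] at this ⊢
      exact this.1
    · rw [mem_mClosure_iff]
      intro β
      obtain ⟨g, ⟨k', hk', l', hl', rfl⟩, he⟩ := hf (fun j => (γ₀, β j))
      refine ⟨l', hl', funext fun j => ?_⟩
      have := congrFun he j
      simp [Pi.smul_apply, Equiv.Perm.smul_def, hfab] at this ⊢
      exact this.2
    · exact Equiv.ext fun x => by rw [show x = (x.1, x.2) from rfl, hfab]; rfl
  · rintro ⟨k, hk, l, hl, rfl⟩ α
    rw [mem_mClosure_iff] at hk hl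
    obtain ⟨k', hk', hek⟩ := hk (fun j => (α j).1)
    obtain ⟨l', hl', hel⟩ := hl (fun j => (α j).2)
    refine ⟨Equiv.prodCongr k' l', ⟨k', hk', l', hl', rfl⟩, funext fun j => ?_⟩
    have h1 := congrFun hek j
    have h2 := congrFun hel j
    simp [Pi.smul_apply, Equiv.Perm.smul_def] at h1 h2 ⊢
    exact Prod.ext h1 h2
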